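/- Let n ≥ 1, let m₁, m₂ > 0 be real numbers, let A₁, A₂ ∈ SO(n), let b₁, b₂ ∈ ℝⁿ, and let L₁, L₂ be symmetric positive semidefinite n×n real matrices of rank at least n−1, so that each map 𝓛ⱼ(Z) = Z Lⱼ + Lⱼ Z is a linear automorphism of the space of skew-symmetric n×n matrices. Equip V = (so(n) × ℝⁿ) × (so(n) × ℝⁿ) with the inner product ⟨((Y₁,y₁),(Y₂,y₂)), ((Z₁,z₁),(Z₂,z₂))⟩ = Σ_{j=1,2} mⱼ (Tr(Yⱼ Lⱼ Zⱼᵀ) + yⱼ·zⱼ). Then the impulse subspace 𝔠 = {((𝓛₁⁻¹(b₁ ∧ u₁), u₁), (𝓛₂⁻¹(b₂ ∧ u₂), u₂)) : u₁, u₂ ∈ ℝⁿ, m₁ A₁ u₁ + m₂ A₂ u₂ = 0} is the orthogonal complement in V of the non-slipping subspace 𝔖 = {((Z₁,z₁),(Z₂,z₂)) ∈ V : A₁(Z₁ b₁ + z₁) = A₂(Z₂ b₂ + z₂)}. -/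

import Mathlib

open Matrix

/-- The wedge product of two vectors: `(a ∧ b)_{ij} = a_j * b_i − a_i * b_j`. -/
def wedge {n : ℕ} (a b : Fin n → ℝ) : Matrix (Fin n) (Fin n) ℝ :=
  Matrix.of fun i j => a j * b i - a i * b j

/-- States of the two-body system: pairs `((Z₁,z₁),(Z₂,z₂))` of (angular, linear) velocities,
an element of `(so(n) × ℝⁿ) × (so(n) × ℝⁿ)` once the skew-symmetry conditions are imposed. -/
abbrev RBState (n : ℕ) :=
  (Matrix (Fin n) (Fin n) ℝ × (Fin n → ℝ)) × (Matrix (Fin n) (Fin n) ℝ × (Fin n → ℝ))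

/-- The kinetic energy inner product
`⟨((Y₁,y₁),(Y₂,y₂)),((Z₁,z₁),(Z₂,z₂))⟩ = Σⱼ mⱼ (Tr(Yⱼ Lⱼ Zⱼᵀ) + yⱼ·zⱼ)`. -/
def kinInner {n : ℕ} (m₁ m₂ : ℝ) (L₁ L₂ : Matrix (Fin n) (Fin n) ℝ)
    (v w : RBState n) : ℝ :=
  m₁ * ((v.1.1 * L₁ * w.1.1ᵀ).trace + v.1.2 ⬝ᵥ w.1.2)
    + m₂ * ((v.2.1 * L₂ * w.2.1ᵀ).trace + v.2.2 ⬝ᵥ w.2.2)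

lemma skew_dot {n : ℕ} (b u : Fin n → ℝ) (Z : Matrix (Fin n) (Fin n) ℝ)
    (hZ : Zᵀ = -Z) : b ⬝ᵥ (Z *ᵥ u) = -(u ⬝ᵥ (Z *ᵥ b)) := by
  rw [Matrix.dotProduct_mulVec, ← Matrix.mulVec_transpose, hZ, Matrix.neg_mulVec,
    neg_dotProduct, dotProduct_comm]

lemma wedge_trace {n : ℕ} (b u : Fin n → ℝ) (Z : Matrix (Fin n) (Fin n) ℝ)
    (hZ : Zᵀ = -Z) : ((wedge b u) * Zᵀ).trace = 2 * (u ⬝ᵥ (Z *ᵥ b)) := by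
  have h1 : ((wedge b u) * Zᵀ).trace = u ⬝ᵥ (Z *ᵥ b) - b ⬝ᵥ (Z *ᵥ u) := by
    simp only [Matrix.trace, Matrix.diag, Matrix.mul_apply, Matrix.transpose_apply,
      wedge, Matrix.of_apply, dotProduct, Matrix.mulVec, ← Finset.sum_sub_distrib,
      Finset.mul_sum]
    exact Finset.sum_congr rfl fun i _ => Finset.sum_congr rfl fun j _ => by ring
  rw [h1, skew_dot b u Z hZ]; ring

lemma trace_sym {n : ℕ} (L Y Z : Matrix (Fin n) (Fin n) ℝ) (hL : Lᵀ = L)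
    (hY : Yᵀ = -Y) (hZ : Zᵀ = -Z) :
    ((Y * L + L * Y) * Zᵀ).trace = 2 * (Y * L * Zᵀ).trace := by
  have key : (L * Y * Zᵀ).trace = (Y * L * Zᵀ).trace := by
    calc (L * Y * Zᵀ).trace = ((L * Y * Zᵀ)ᵀ).trace := (Matrix.trace_transpose _).symm
    _ = (Z * (Yᵀ * Lᵀ)).trace := by
        rw [Matrix.transpose_mul, Matrix.transpose_mul, Matrix.transpose_transpose]
    _ = -(Z * (Y * L)).trace := by rw [hY, hL]; simp
    _ = -(Y * L * Z).trace := by rw [Matrix.trace_mul_comm]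
    _ = (Y * L * Zᵀ).trace := by rw [hZ]; simp
  rw [Matrix.add_mul, Matrix.trace_add, key]; ring

lemma trace_self_zero {n : ℕ} (S : Matrix (Fin n) (Fin n) ℝ)
    (h : (S * Sᵀ).trace = 0) : S = 0 := by
  have h2 : ∀ i ∈ Finset.univ, ∀ j ∈ Finset.univ, (0:ℝ) ≤ S i j * S i j :=
    fun i _ j _ => mul_self_nonneg _
  have hsum : ∑ i, ∑ j, S i j * S i j = 0 := by
    simpa [Matrix.trace, Matrix.mul_apply] using h
  ext i j
  have h3 := (Finset.sum_eq_zero_iff_of_nonneg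
    (fun i _ => Finset.sum_nonneg (h2 i (Finset.mem_univ i)))).mp hsum i (Finset.mem_univ i)
  have h4 := (Finset.sum_eq_zero_iff_of_nonneg (h2 i (Finset.mem_univ i))).mp h3 j
    (Finset.mem_univ j)
  simpa [mul_self_eq_zero] using h4

lemma wedge_skew {n : ℕ} (b u : Fin n → ℝ) : (wedge b u)ᵀ = -(wedge b u) := by
  ext i j; simp [wedge]

lemma recover {n : ℕ} (L Y : Matrix (Fin n) (Fin n) ℝ) (b u : Fin n → ℝ)
    (hL : Lᵀ = L) (hY : Yᵀ = -Y)
    (hk : ∀ Z : Matrix (Fin n) (Fin n) ℝ, Zᵀ = -Z →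
      (Y * L * Zᵀ).trace = u ⬝ᵥ (Z *ᵥ b)) :
    Y * L + L * Y = wedge b u := by
  set S := Y * L + L * Y - wedge b u with hS
  have hSskew : Sᵀ = -S := by
    rw [hS, Matrix.transpose_sub, Matrix.transpose_add, Matrix.transpose_mul,
      Matrix.transpose_mul, hL, hY, wedge_skew]
    simp [Matrix.mul_neg, Matrix.neg_mul]; abel
  have htr : (S * Sᵀ).trace = 0 := by
    have hsplit : (S * Sᵀ).trace
        = ((Y * L + L * Y) * Sᵀ).trace - ((wedge b u) * Sᵀ).trace := by
      rw [← Matrix.trace_sub, ← Matrix.sub_mul]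
    rw [hsplit, trace_sym L Y S hL hY hSskew, wedge_trace b u S hSskew, hk S hSskew]
    ring
  exact sub_eq_zero.mp (trace_self_zero S htr)

lemma orth_dot {n : ℕ} (A : Matrix (Fin n) (Fin n) ℝ) (hA : Aᵀ * A = 1)
    (x y : Fin n → ℝ) : (A *ᵥ x) ⬝ᵥ (A *ᵥ y) = x ⬝ᵥ y := by
  rw [Matrix.dotProduct_mulVec, ← Matrix.mulVec_transpose, Matrix.mulVec_mulVec, hA,
    Matrix.one_mulVec]

/-- The impulse subspace
`𝔠 = {((𝓛₁⁻¹(b₁ ∧ u₁), u₁), (𝓛₂⁻¹(b₂ ∧ u₂), u₂)) : m₁ A₁ u₁ + m₂ A₂ u₂ = 0}`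
(described by the conditions `𝓛ⱼ(Yⱼ) = bⱼ ∧ uⱼ`, which determine `Yⱼ` in `so(n)` uniquely
since each `𝓛ⱼ(Z) = Z Lⱼ + Lⱼ Z` is a linear automorphism of `so(n)` under the rank
hypothesis) is the orthogonal complement, inside
`V = (so(n) × ℝⁿ) × (so(n) × ℝⁿ)` with the kinetic energy inner product, of the
non-slipping subspace `𝔖 = {((Z₁,z₁),(Z₂,z₂)) : A₁(Z₁ b₁ + z₁) = A₂(Z₂ b₂ + z₂)}`. -/
theorem impulse_subspace_eq_orthogonal_complement_of_nonslipping
    (n : ℕ) (hn : 1 ≤ n) (m₁ m₂ : ℝ) (hm₁ : 0 < m₁) (hm₂ : 0 < m₂)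
    (A₁ A₂ : Matrix (Fin n) (Fin n) ℝ)
    (hA₁ : A₁ᵀ * A₁ = 1) (hA₁det : A₁.det = 1)
    (hA₂ : A₂ᵀ * A₂ = 1) (hA₂det : A₂.det = 1)
    (b₁ b₂ : Fin n → ℝ)
    (L₁ L₂ : Matrix (Fin n) (Fin n) ℝ)
    (hL₁ : L₁.PosSemidef) (hL₂ : L₂.PosSemidef)
    (hr₁ : n - 1 ≤ L₁.rank) (hr₂ : n - 1 ≤ L₂.rank) :
    ∀ v : RBState n, v.1.1ᵀ = -v.1.1 → v.2.1ᵀ = -v.2.1 →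
      ((v.1.1 * L₁ + L₁ * v.1.1 = wedge b₁ v.1.2 ∧
        v.2.1 * L₂ + L₂ * v.2.1 = wedge b₂ v.2.2 ∧
        m₁ • (A₁ *ᵥ v.1.2) + m₂ • (A₂ *ᵥ v.2.2) = 0)
        ↔ ∀ w : RBState n, w.1.1ᵀ = -w.1.1 → w.2.1ᵀ = -w.2.1 →
            A₁ *ᵥ (w.1.1 *ᵥ b₁ + w.1.2) = A₂ *ᵥ (w.2.1 *ᵥ b₂ + w.2.2) →
            kinInner m₁ m₂ L₁ L₂ v w = 0) := by
  have hL₁s : L₁ᵀ = L₁ := by simpa [Matrix.IsSymm] using hL₁.1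
  have hL₂s : L₂ᵀ = L₂ := by simpa [Matrix.IsSymm] using hL₂.1
  have hA₁' : A₁ * A₁ᵀ = 1 := mul_eq_one_comm.mp hA₁
  have hA₂' : A₂ * A₂ᵀ = 1 := mul_eq_one_comm.mp hA₂
  rintro ⟨⟨Y₁, u₁⟩, ⟨Y₂, u₂⟩⟩ hv1 hv2
  dsimp only at hv1 hv2 ⊢
  constructor
  · rintro ⟨h1, h2, h3⟩ ⟨⟨Z₁, z₁⟩, ⟨Z₂, z₂⟩⟩ hw1 hw2 hw
    dsimp only at hw1 hw2 hw
    have t1 : (Y₁ * L₁ * Z₁ᵀ).trace = u₁ ⬝ᵥ (Z₁ *ᵥ b₁) := by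
      have e := trace_sym L₁ Y₁ Z₁ hL₁s hv1 hw1
      rw [h1, wedge_trace b₁ u₁ Z₁ hw1] at e
      linarith
    have t2 : (Y₂ * L₂ * Z₂ᵀ).trace = u₂ ⬝ᵥ (Z₂ *ᵥ b₂) := by
      have e := trace_sym L₂ Y₂ Z₂ hL₂s hv2 hw2
      rw [h2, wedge_trace b₂ u₂ Z₂ hw2] at e
      linarith
    have e1 := orth_dot A₁ hA₁ u₁ (Z₁ *ᵥ b₁ + z₁)
    have e2 := orth_dot A₂ hA₂ u₂ (Z₂ *ᵥ b₂ + z₂)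
    rw [← hw] at e2
    have efin : (m₁ • (A₁ *ᵥ u₁) + m₂ • (A₂ *ᵥ u₂)) ⬝ᵥ (A₁ *ᵥ (Z₁ *ᵥ b₁ + z₁)) = 0 := by
      rw [h3, zero_dotProduct]
    rw [add_dotProduct, smul_dotProduct, smul_dotProduct,
      e1, e2, dotProduct_add, dotProduct_add] at efin
    simp only [kinInner]
    rw [t1, t2]
    simp only [smul_eq_mul] at efin
    linarith
  · intro h
    have key1 : ∀ Z : Matrix (Fin n) (Fin n) ℝ, Zᵀ = -Z →
        (Y₁ * L₁ * Zᵀ).trace = u₁ ⬝ᵥ (Z *ᵥ b₁) := by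
      intro Z hZ
      have := h ((Z, -(Z *ᵥ b₁)), (0, 0)) hZ (by simp) (by simp)
      simp only [kinInner] at this
      simp only [Matrix.transpose_zero, Matrix.mul_zero, Matrix.trace_zero,
        dotProduct_zero, add_zero, mul_zero, dotProduct_neg] at this
      rcases mul_eq_zero.mp this with h0 | h0
      · exact absurd h0 hm₁.ne'
      · linarith
    have key2 : ∀ Z : Matrix (Fin n) (Fin n) ℝ, Zᵀ = -Z →
        (Y₂ * L₂ * Zᵀ).trace = u₂ ⬝ᵥ (Z *ᵥ b₂) := by
      intro Z hZ
      have := h ((0, 0), (Z, -(Z *ᵥ b₂))) (by simp) hZ (by simp)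
      simp only [kinInner] at this
      simp only [Matrix.transpose_zero, Matrix.mul_zero, Matrix.trace_zero,
        dotProduct_zero, add_zero, mul_zero, zero_add,
        dotProduct_neg] at this
      rcases mul_eq_zero.mp this with h0 | h0
      · exact absurd h0 hm₂.ne'
      · linarith
    refine ⟨recover L₁ Y₁ b₁ u₁ hL₁s hv1 key1, recover L₂ Y₂ b₂ u₂ hL₂s hv2 key2, ?_⟩
    have hall : ∀ c : Fin n → ℝ, (m₁ • (A₁ *ᵥ u₁) + m₂ • (A₂ *ᵥ u₂)) ⬝ᵥ c = 0 := by
      intro c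
      have hcon : A₁ *ᵥ ((0 : Matrix (Fin n) (Fin n) ℝ) *ᵥ b₁ + A₁ᵀ *ᵥ c)
          = A₂ *ᵥ ((0 : Matrix (Fin n) (Fin n) ℝ) *ᵥ b₂ + A₂ᵀ *ᵥ c) := by
        simp [Matrix.mulVec_mulVec, hA₁', hA₂']
      have := h ((0, A₁ᵀ *ᵥ c), (0, A₂ᵀ *ᵥ c)) (by simp) (by simp) hcon
      simp only [kinInner] at this
      simp only [Matrix.transpose_zero, Matrix.mul_zero, Matrix.trace_zero,
        zero_add] at this
      have d1 : (A₁ *ᵥ u₁) ⬝ᵥ c = u₁ ⬝ᵥ (A₁ᵀ *ᵥ c) := by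
        rw [Matrix.dotProduct_mulVec, Matrix.vecMul_transpose]
      have d2 : (A₂ *ᵥ u₂) ⬝ᵥ c = u₂ ⬝ᵥ (A₂ᵀ *ᵥ c) := by
        rw [Matrix.dotProduct_mulVec, Matrix.vecMul_transpose]
      rw [add_dotProduct, smul_dotProduct, smul_dotProduct, d1, d2]
      simpa using this
    have := hall (m₁ • (A₁ *ᵥ u₁) + m₂ • (A₂ *ᵥ u₂))
    exact dotProduct_self_eq_zero.mp this
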